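/- Let k ≥ 0 be an integer and g : SL_2(C) → C holomorphic with H0 · g = (k+2)g. If f_o is one holomorphic solution of H0·f = kf, H++·f = g, then the set of all holomorphic solutions is exactly { f_o + Σ_{m,n ≥ 0, m+n = k} c_{mn} (u^1_+)^m (u^2_+)^n |_{SL_2(C)} : c_{mn} ∈ C }; in particular the solution space is an affine space over a vector space of dimension k + 1. -/

import Mathlib

open Matrix

noncomputable section

attribute [local instance] Matrix.normedAddCommGroup Matrix.normedSpace

/-- SL₂(ℂ) as a subset of the 2×2 complex matrices. -/
def SL2 : Set (Matrix (Fin 2) (Fin 2) ℂ) := {U | U.det = 1}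

/-- A function is holomorphic on SL₂(ℂ) iff it is holomorphic on an open neighbourhood of
SL₂(ℂ) in the matrix space (SL₂(ℂ) is a closed Stein submanifold, so this is equivalent to
intrinsic holomorphy). -/
def HolSL2 (f : Matrix (Fin 2) (Fin 2) ℂ → ℂ) : Prop :=
  ∃ Ω : Set (Matrix (Fin 2) (Fin 2) ℂ), IsOpen Ω ∧ SL2 ⊆ Ω ∧ DifferentiableOn ℂ f Ω

/-- Directional derivative of f along the left-invariant vector field corresponding to
X ∈ sl₂(ℂ), at the point U: (X·f)(U) = df_U(U·X). -/
def lieD (X : Matrix (Fin 2) (Fin 2) ℂ) (f : Matrix (Fin 2) (Fin 2) ℂ → ℂ)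
    (U : Matrix (Fin 2) (Fin 2) ℂ) : ℂ := fderiv ℂ f U (U * X)

def H0m : Matrix (Fin 2) (Fin 2) ℂ := !![1, 0; 0, -1]
def Hppm : Matrix (Fin 2) (Fin 2) ℂ := !![0, 1; 0, 0]
def Hmmm : Matrix (Fin 2) (Fin 2) ℂ := !![0, 0; 1, 0]

/- STATEMENT 10: Let k ≥ 0 and g holomorphic with H₀·g = (k+2)g.  If f₀ is one
holomorphic solution of H₀·f = kf, H₊₊·f = g, then the holomorphic solutions are
exactly the functions f₀ + Σ_{m+n=k} c_{mn} (u¹₊)^m (u²₊)^n on SL₂(ℂ); the coefficients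
are unique, so the solution space is an affine space over a (k+1)-dimensional vector
space. -/
abbrev Mat := Matrix (Fin 2) (Fin 2) ℂ

lemma one_add_smul_Hppm (s : ℂ) : (1 : Mat) + s • Hppm = !![1, s; 0, 1] := by
  ext i j
  fin_cases i <;> fin_cases j <;> simp [Hppm, Matrix.one_apply]

lemma det_one_add_smul_Hppm (s : ℂ) : ((1 : Mat) + s • Hppm).det = 1 := by
  rw [one_add_smul_Hppm, Matrix.det_fin_two_of]; ring

def Dm (t : ℂ) : Mat := !![Complex.exp t, 0; 0, Complex.exp (-t)]

lemma det_Dm (t : ℂ) : (Dm t).det = 1 := by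
  rw [Dm, Matrix.det_fin_two_of]; simp [← Complex.exp_add]

lemma mem_SL2_mul {U V : Mat} (hU : U ∈ SL2) (hV : V.det = 1) : U * V ∈ SL2 := by
  simp only [SL2, Set.mem_setOf_eq] at *
  rw [Matrix.det_mul, hU, hV, one_mul]

lemma Hppm_mul_Hppm : Hppm * Hppm = 0 := by
  simp [Hppm]
  ext i j; fin_cases i <;> fin_cases j <;> simp [Matrix.mul_apply, Fin.sum_univ_two, Hppm]

lemma hasDerivAt_curvePP (U : Mat) (s : ℂ) :
    HasDerivAt (fun s : ℂ => U * ((1 : Mat) + s • Hppm)) (U * Hppm) s := by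
  have : (fun s : ℂ => U * ((1 : Mat) + s • Hppm)) = fun s : ℂ => U + s • (U * Hppm) := by
    funext s
    rw [mul_add, mul_one, Matrix.mul_smul]
  rw [this]
  exact (((hasDerivAt_id s).smul_const (U * Hppm)).const_add U).congr_deriv (one_smul _ _)

lemma curvePP_mul_Hppm (U : Mat) (s : ℂ) :
    (U * ((1 : Mat) + s • Hppm)) * Hppm = U * Hppm := by
  rw [mul_assoc, add_mul, one_mul, Matrix.smul_mul, Hppm_mul_Hppm]
  simp

def E0 : Mat := !![1, 0; 0, 0]
def E1 : Mat := !![0, 0; 0, 1]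

lemma Dm_decomp (t : ℂ) : Dm t = Complex.exp t • E0 + Complex.exp (-t) • E1 := by
  ext i j; fin_cases i <;> fin_cases j <;> simp [Dm, E0, E1]

lemma Dm_mul_H0m (t : ℂ) : Dm t * H0m = Complex.exp t • E0 + (-Complex.exp (-t)) • E1 := by
  ext i j
  fin_cases i <;> fin_cases j <;>
    simp [Dm, H0m, E0, E1, Matrix.mul_apply, Fin.sum_univ_two]

lemma hasDerivAt_curveD (U : Mat) (t : ℂ) :
    HasDerivAt (fun t : ℂ => U * Dm t) (U * Dm t * H0m) t := by
  have h1 : (fun t : ℂ => U * Dm t)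
      = fun t : ℂ => Complex.exp t • (U * E0) + Complex.exp (-t) • (U * E1) := by
    funext t
    rw [Dm_decomp, mul_add, Matrix.mul_smul, Matrix.mul_smul]
  have h2 : U * Dm t * H0m
      = Complex.exp t • (U * E0) + (Complex.exp (-t) * -1) • (U * E1) := by
    rw [mul_assoc, Dm_mul_H0m, mul_add, Matrix.mul_smul, Matrix.mul_smul]
    rw [mul_neg_one, neg_smul]
  rw [h1, h2]
  have e1 : HasDerivAt (fun t : ℂ => Complex.exp t) (Complex.exp t) t := Complex.hasDerivAt_exp t
  have e2 : HasDerivAt (fun t : ℂ => Complex.exp (-t)) (Complex.exp (-t) * -1) t :=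
    ((hasDerivAt_id t).neg.cexp)
  exact (e1.smul_const (U * E0)).add (e2.smul_const (U * E1))

lemma hasDerivAt_comp_curve {h : Mat → ℂ} {Ω : Set Mat} (hΩ : IsOpen Ω) (hsub : SL2 ⊆ Ω)
    (hd : DifferentiableOn ℂ h Ω) {γ : ℂ → Mat} {γ' : Mat} {s : ℂ}
    (hγ : HasDerivAt γ γ' s) (hmem : γ s ∈ SL2) :
    HasDerivAt (fun t => h (γ t)) (fderiv ℂ h (γ s) γ') s := by
  have hda : DifferentiableAt ℂ h (γ s) := hd.differentiableAt (hΩ.mem_nhds (hsub hmem))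
  exact (hda.hasFDerivAt).comp_hasDerivAt s hγ

lemma hpp_inv {h : Mat → ℂ} {Ω : Set Mat} (hΩ : IsOpen Ω) (hsub : SL2 ⊆ Ω)
    (hd : DifferentiableOn ℂ h Ω) (heq : ∀ U ∈ SL2, lieD Hppm h U = 0)
    {U : Mat} (hU : U ∈ SL2) (s : ℂ) :
    h (U * ((1 : Mat) + s • Hppm)) = h U := by
  have mem : ∀ s : ℂ, U * ((1 : Mat) + s • Hppm) ∈ SL2 :=
    fun s => mem_SL2_mul hU (det_one_add_smul_Hppm s)
  have hG : ∀ s : ℂ, HasDerivAt (fun s : ℂ => h (U * ((1 : Mat) + s • Hppm))) 0 s := by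
    intro s
    have h1 := hasDerivAt_comp_curve hΩ hsub hd (hasDerivAt_curvePP U s) (mem s)
    have h2 : fderiv ℂ h (U * ((1 : Mat) + s • Hppm)) (U * Hppm) = 0 := by
      have := heq _ (mem s)
      rwa [lieD, curvePP_mul_Hppm] at this
    rwa [h2] at h1
  have hconst := is_const_of_deriv_eq_zero
    (fun s => (hG s).differentiableAt) (fun s => (hG s).deriv) s 0
  simpa using hconst

lemma h0_scale {k : ℕ} {h : Mat → ℂ} {Ω : Set Mat} (hΩ : IsOpen Ω) (hsub : SL2 ⊆ Ω)
    (hd : DifferentiableOn ℂ h Ω) (heq : ∀ U ∈ SL2, lieD H0m h U = (k : ℂ) * h U)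
    {U : Mat} (hU : U ∈ SL2) (t : ℂ) :
    h (U * Dm t) = Complex.exp ((k : ℂ) * t) * h U := by
  have mem : ∀ t : ℂ, U * Dm t ∈ SL2 := fun t => mem_SL2_mul hU (det_Dm t)
  set F := fun t : ℂ => h (U * Dm t) with hF
  have hFd : ∀ t : ℂ, HasDerivAt F ((k : ℂ) * F t) t := by
    intro t
    have h1 := hasDerivAt_comp_curve hΩ hsub hd (hasDerivAt_curveD U t) (mem t)
    have h2 : fderiv ℂ h (U * Dm t) (U * Dm t * H0m) = (k : ℂ) * F t := heq _ (mem t)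
    rwa [h2] at h1
  have hG : ∀ t : ℂ, HasDerivAt (fun t : ℂ => Complex.exp (-((k : ℂ) * t)) * F t) 0 t := by
    intro t
    have e : HasDerivAt (fun t : ℂ => Complex.exp (-((k : ℂ) * t)))
        (Complex.exp (-((k : ℂ) * t)) * -(k : ℂ)) t := by
      have : HasDerivAt (fun t : ℂ => -((k : ℂ) * t)) (-(k : ℂ)) t := by
        exact ((hasDerivAt_id t).const_mul (k : ℂ)).fun_neg.congr_deriv (by simp)
      exact this.cexp
    have := e.mul (hFd t)
    refine this.congr_deriv ?_
    ring
  have hconst := is_const_of_deriv_eq_zero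
    (fun t => (hG t).differentiableAt) (fun t => (hG t).deriv) t 0
  have hDm0 : Dm 0 = (1 : Mat) := by
    ext i j
    fin_cases i <;> fin_cases j <;> simp [Dm, Matrix.one_apply]
  have h0 : F 0 = h U := by
    simp only [hF]
    rw [hDm0, mul_one]
  rw [mul_zero, neg_zero, Complex.exp_zero, one_mul, h0] at hconst
  have : Complex.exp ((k : ℂ) * t) * (Complex.exp (-((k : ℂ) * t)) * F t)
      = Complex.exp ((k : ℂ) * t) * h U := by rw [hconst]
  rwa [← mul_assoc, ← Complex.exp_add, add_neg_cancel, Complex.exp_zero, one_mul] at this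

lemma repF1 {k : ℕ} {h : Mat → ℂ} {Ω : Set Mat} (hΩ : IsOpen Ω) (hsub : SL2 ⊆ Ω)
    (hd : DifferentiableOn ℂ h Ω) (heq0 : ∀ U ∈ SL2, lieD H0m h U = (k : ℂ) * h U)
    (heqp : ∀ U ∈ SL2, lieD Hppm h U = 0)
    {U : Mat} (hU : U ∈ SL2) (hc : U 1 0 ≠ 0) :
    h U = (U 1 0) ^ k * h !![U 0 0 / U 1 0, -1; 1, 0] := by
  set a := U 0 0 with ha; set b := U 0 1 with hb; set c := U 1 0 with hcc
  set d := U 1 1 with hdd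
  have hdet : a * d - b * c = 1 := by
    have := hU; simpa [SL2, Matrix.det_fin_two] using this
  set N : Mat := !![a / c, -1; 1, 0] with hN
  have hNmem : N ∈ SL2 := by
    simp [SL2, hN, Matrix.det_fin_two_of]
  set t := Complex.log c with ht
  have hexp : Complex.exp t = c := Complex.exp_log hc
  have hexpn : Complex.exp (-t) = c⁻¹ := by rw [Complex.exp_neg, hexp]
  set M : Mat := N * Dm t with hM
  have hMmem : M ∈ SL2 := mem_SL2_mul hNmem (det_Dm t)
  have hUeq : U = M * ((1 : Mat) + (d / c) • Hppm) := by
    rw [hM, hN, Dm, one_add_smul_Hppm]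
    rw [Matrix.eta_fin_two U, ← ha, ← hb, ← hcc, ← hdd]
    ext i j
    fin_cases i <;> fin_cases j <;>
        simp [Matrix.mul_apply, Fin.sum_univ_two, hexp, hexpn]
    · field_simp
    · field_simp
      linear_combination -hdet
    · field_simp
  have h1 : h U = h M := by
    rw [hUeq]
    exact hpp_inv hΩ hsub hd heqp hMmem _
  have h2 : h M = Complex.exp ((k : ℂ) * t) * h N :=
    h0_scale hΩ hsub hd heq0 hNmem t
  have h3 : Complex.exp ((k : ℂ) * t) = c ^ k := by
    rw [Complex.exp_nat_mul, hexp]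
  rw [h1, h2, h3, hN]

lemma repF2 {k : ℕ} {h : Mat → ℂ} {Ω : Set Mat} (hΩ : IsOpen Ω) (hsub : SL2 ⊆ Ω)
    (hd : DifferentiableOn ℂ h Ω) (heq0 : ∀ U ∈ SL2, lieD H0m h U = (k : ℂ) * h U)
    (heqp : ∀ U ∈ SL2, lieD Hppm h U = 0)
    {U : Mat} (hU : U ∈ SL2) (hc : U 0 0 ≠ 0) :
    h U = (U 0 0) ^ k * h !![1, 0; U 1 0 / U 0 0, 1] := by
  set a := U 0 0 with ha; set b := U 0 1 with hb; set c := U 1 0 with hcc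
  set d := U 1 1 with hdd
  have hdet : a * d - b * c = 1 := by
    have := hU; simpa [SL2, Matrix.det_fin_two] using this
  set N : Mat := !![1, 0; c / a, 1] with hN
  have hNmem : N ∈ SL2 := by
    simp [SL2, hN, Matrix.det_fin_two_of]
  set t := Complex.log a with ht
  have hexp : Complex.exp t = a := Complex.exp_log hc
  have hexpn : Complex.exp (-t) = a⁻¹ := by rw [Complex.exp_neg, hexp]
  set M : Mat := N * Dm t with hM
  have hMmem : M ∈ SL2 := mem_SL2_mul hNmem (det_Dm t)
  have hUeq : U = M * ((1 : Mat) + (b / a) • Hppm) := by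
    rw [hM, hN, Dm, one_add_smul_Hppm]
    rw [Matrix.eta_fin_two U, ← ha, ← hb, ← hcc, ← hdd]
    ext i j
    fin_cases i <;> fin_cases j <;>
        simp [Matrix.mul_apply, Fin.sum_univ_two, hexp, hexpn]
    all_goals field_simp
    all_goals first
      | linear_combination hdet
      | linear_combination -hdet
  have h1 : h U = h M := by
    rw [hUeq]
    exact hpp_inv hΩ hsub hd heqp hMmem _
  have h2 : h M = Complex.exp ((k : ℂ) * t) * h N :=
    h0_scale hΩ hsub hd heq0 hNmem t
  have h3 : Complex.exp ((k : ℂ) * t) = a ^ k := by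
    rw [Complex.exp_nat_mul, hexp]
  rw [h1, h2, h3, hN]

lemma poly_of_growth (k : ℕ) : ∀ (ψ : ℂ → ℂ), Differentiable ℂ ψ →
    (∃ C : ℝ, ∀ z, ‖ψ z‖ ≤ C * (1 + ‖z‖) ^ k) →
    ∃ c : Fin (k + 1) → ℂ, ∀ z, ψ z = ∑ m : Fin (k + 1), c m * z ^ (m : ℕ) := by
  induction k with
  | zero =>
    rintro ψ hψ ⟨C, hC⟩
    have hb : Bornology.IsBounded (Set.range ψ) := by
      rw [isBounded_iff_forall_norm_le]
      exact ⟨C, by rintro x ⟨z, rfl⟩; simpa using hC z⟩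
    obtain ⟨c, hc⟩ := hψ.exists_eq_const_of_bounded hb
    exact ⟨fun _ => c, fun z => by simp [hc]⟩
  | succ k ih =>
    rintro ψ hψ ⟨C, hC⟩
    have hC0 : ∀ z, ‖ψ z‖ ≤ max C 0 * (1 + ‖z‖) ^ (k + 1) := by
      intro z
      refine (hC z).trans ?_
      exact mul_le_mul_of_nonneg_right (le_max_left C 0) (by positivity)
    set C' := max C 0 with hC'
    have hC'0 : 0 ≤ C' := le_max_right _ _
    have hd : Differentiable ℂ (deriv ψ) := by
      have h1 : Differentiable ℂ (fderiv ℂ ψ) :=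
        fun z => ((hψ.analyticAt z).fderiv).differentiableAt
      have : deriv ψ = fun z => fderiv ℂ ψ z 1 := by
        funext z; rw [← fderiv_apply_one_eq_deriv]
      rw [this]
      exact fun z => ((ContinuousLinearMap.apply ℂ ℂ (1 : ℂ)).differentiable.comp h1) z
    have hb : ∀ z, ‖deriv ψ z‖ ≤ (C' * 2 ^ (k + 1)) * (1 + ‖z‖) ^ k := by
      intro z
      set R : ℝ := 1 + ‖z‖ with hR
      have hRpos : 0 < R := by positivity
      have key : ‖deriv ψ z‖ ≤ C' * (2 * R) ^ (k + 1) / R := by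
        refine Complex.norm_deriv_le_of_forall_mem_sphere_norm_le hRpos (hψ.diffContOnCl) ?_
        intro w hw
        have hwz : ‖w‖ ≤ ‖z‖ + R := by
          have := mem_sphere_iff_norm.mp hw
          calc ‖w‖ = ‖z + (w - z)‖ := by ring_nf
          _ ≤ ‖z‖ + ‖w - z‖ := norm_add_le _ _
          _ = ‖z‖ + R := by rw [this]
        refine (hC0 w).trans ?_
        have : (1 + ‖w‖) ≤ 2 * R := by
          rw [hR] at *; linarith
        exact mul_le_mul_of_nonneg_left (pow_le_pow_left₀ (by positivity) this _) hC'0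
      refine key.trans (le_of_eq ?_)
      rw [mul_pow]
      field_simp
      ring
    obtain ⟨b, hb'⟩ := ih (deriv ψ) hd ⟨C' * 2 ^ (k + 1), hb⟩
    set Q : ℂ → ℂ :=
      fun z => ψ 0 + ∑ m : Fin (k + 1), b m / ((m : ℕ) + 1) * z ^ ((m : ℕ) + 1) with hQ
    have hQd : ∀ z, HasDerivAt Q (∑ m : Fin (k + 1), b m * z ^ (m : ℕ)) z := by
      intro z
      have hsum : HasDerivAt (fun z : ℂ => ∑ m : Fin (k + 1), b m / ((m : ℕ) + 1) * z ^ ((m : ℕ) + 1))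
          (∑ m : Fin (k + 1), b m * z ^ (m : ℕ)) z := by
        have : ∀ m : Fin (k + 1),
            HasDerivAt (fun z : ℂ => b m / ((m : ℕ) + 1) * z ^ ((m : ℕ) + 1))
              (b m * z ^ (m : ℕ)) z := by
          intro m
          have hp := (hasDerivAt_pow ((m : ℕ) + 1) z).const_mul (b m / ((m : ℕ) + 1))
          have hne : ((m : ℕ) + 1 : ℂ) ≠ 0 := by exact_mod_cast Nat.succ_ne_zero (m : ℕ)
          refine hp.congr_deriv ?_
          push_cast
          field_simp
        exact HasDerivAt.fun_sum (fun m _ => this m)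
      simpa [hQ] using hsum.const_add (ψ 0)
    have hdiff : ∀ z, ψ z - Q z = ψ 0 - Q 0 := by
      intro z
      refine is_const_of_deriv_eq_zero (f := fun z => ψ z - Q z) ?_ ?_ z 0
      · exact fun z => ((hψ z).sub (hQd z).differentiableAt)
      · intro z
        have h1 : HasDerivAt (fun z => ψ z - Q z)
            (deriv ψ z - ∑ m : Fin (k + 1), b m * z ^ (m : ℕ)) z :=
          ((hψ z).hasDerivAt).sub (hQd z)
        rw [h1.deriv, hb' z, sub_self]
    have hQ0 : Q 0 = ψ 0 := by
      simp [hQ]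
    refine ⟨Fin.cons (ψ 0) (fun m => b m / ((m : ℕ) + 1)), fun z => ?_⟩
    have hz : ψ z = Q z := by
      have hh := hdiff z
      rw [hQ0, sub_self] at hh
      exact sub_eq_zero.mp hh
    rw [hz, hQ, Fin.sum_univ_succ]
    simp [Fin.val_succ]

lemma mem_SL2_psi (z : ℂ) : !![z, -1; 1, 0] ∈ SL2 := by
  simp [SL2, Matrix.det_fin_two_of]

lemma mem_SL2_chi (w : ℂ) : !![1, 0; w, 1] ∈ SL2 := by
  simp [SL2, Matrix.det_fin_two_of]

lemma diff_comp_line {h : Mat → ℂ} {Ω : Set Mat} (hΩ : IsOpen Ω) (hsub : SL2 ⊆ Ω)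
    (hd : DifferentiableOn ℂ h Ω) (E F : Mat) (hmem : ∀ z : ℂ, z • E + F ∈ SL2) :
    Differentiable ℂ (fun z : ℂ => h (z • E + F)) := by
  intro z
  have h1 : DifferentiableAt ℂ h (z • E + F) :=
    hd.differentiableAt (hΩ.mem_nhds (hsub (hmem z)))
  have h2 : DifferentiableAt ℂ (fun z : ℂ => z • E + F) z :=
    (differentiableAt_id.smul_const E).add_const F
  exact h1.comp z h2

lemma master {k : ℕ} {h : Mat → ℂ} {Ω : Set Mat} (hΩ : IsOpen Ω) (hsub : SL2 ⊆ Ω)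
    (hd : DifferentiableOn ℂ h Ω) (heq0 : ∀ U ∈ SL2, lieD H0m h U = (k : ℂ) * h U)
    (heqp : ∀ U ∈ SL2, lieD Hppm h U = 0) :
    ∃ c : Fin (k + 1) → ℂ, ∀ U ∈ SL2,
      h U = ∑ m : Fin (k + 1), c m * U 0 0 ^ (m : ℕ) * U 1 0 ^ (k - (m : ℕ)) := by
  set ψ : ℂ → ℂ := fun z => h !![z, -1; 1, 0] with hψdef
  set χ : ℂ → ℂ := fun w => h !![1, 0; w, 1] with hχdef
  have hψline : (fun z : ℂ => !![z, -1; 1, 0]) =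
      fun z : ℂ => z • (!![1, 0; 0, 0] : Mat) + !![0, -1; 1, 0] := by
    funext z; ext i j; fin_cases i <;> fin_cases j <;> simp
  have hχline : (fun w : ℂ => !![1, 0; w, 1]) =
      fun w : ℂ => w • (!![0, 0; 1, 0] : Mat) + !![1, 0; 0, 1] := by
    funext w; ext i j; fin_cases i <;> fin_cases j <;> simp
  have hψdiff : Differentiable ℂ ψ := by
    have := diff_comp_line hΩ hsub hd !![1, 0; 0, 0] !![0, -1; 1, 0]
      (fun z => by rw [← congrFun hψline z]; exact mem_SL2_psi z)
    simpa [hψdef, ← congrFun hψline] using this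
  have hχdiff : Differentiable ℂ χ := by
    have := diff_comp_line hΩ hsub hd !![0, 0; 1, 0] !![1, 0; 0, 1]
      (fun w => by rw [← congrFun hχline w]; exact mem_SL2_chi w)
    simpa [hχdef, ← congrFun hχline] using this
  -- relation ψ z = z ^ k * χ z⁻¹ for z ≠ 0
  have hrel : ∀ z : ℂ, z ≠ 0 → ψ z = z ^ k * χ z⁻¹ := by
    intro z hz
    have := repF2 hΩ hsub hd heq0 heqp (mem_SL2_psi z) (by simpa using hz)
    simpa [hψdef, hχdef, one_div] using this
  -- growth bound for ψ
  obtain ⟨x1, -, hx1'⟩ := (isCompact_closedBall (0 : ℂ) 1).exists_isMaxOn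
    (Metric.nonempty_closedBall.2 zero_le_one) (hχdiff.continuous.norm.continuousOn)
  obtain ⟨x2, -, hx2'⟩ := (isCompact_closedBall (0 : ℂ) 1).exists_isMaxOn
    (Metric.nonempty_closedBall.2 zero_le_one) (hψdiff.continuous.norm.continuousOn)
  have hx1 : ∀ y ∈ Metric.closedBall (0 : ℂ) 1, ‖χ y‖ ≤ ‖χ x1‖ := fun y hy => hx1' hy
  have hx2 : ∀ y ∈ Metric.closedBall (0 : ℂ) 1, ‖ψ y‖ ≤ ‖ψ x2‖ := fun y hy => hx2' hy
  set C : ℝ := max ‖χ x1‖ ‖ψ x2‖ with hCdef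
  have hgrow : ∀ z : ℂ, ‖ψ z‖ ≤ C * (1 + ‖z‖) ^ k := by
    intro z
    have h1le : (1 : ℝ) ≤ (1 + ‖z‖) ^ k := one_le_pow₀ (by linarith [norm_nonneg z])
    rcases le_or_gt ‖z‖ 1 with hle | hgt
    · have : ‖ψ z‖ ≤ ‖ψ x2‖ := hx2 z (by simpa [Metric.mem_closedBall] using hle)
      calc ‖ψ z‖ ≤ ‖ψ x2‖ := this
        _ ≤ C := le_max_right _ _
        _ = C * 1 := (mul_one _).symm
        _ ≤ C * (1 + ‖z‖) ^ k := by
            have hC0 : 0 ≤ C := le_trans (norm_nonneg _) (le_max_right _ _)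
            exact mul_le_mul_of_nonneg_left h1le hC0
    · have hz : z ≠ 0 := by
        intro hzz; rw [hzz] at hgt; simp at hgt; linarith
      have hinv : ‖z⁻¹‖ ≤ 1 := by
        rw [norm_inv]
        exact inv_le_one_of_one_le₀ hgt.le
      rw [hrel z hz]
      rw [norm_mul, norm_pow]
      have hb1 : ‖χ z⁻¹‖ ≤ ‖χ x1‖ := hx1 _ (by simpa [Metric.mem_closedBall] using hinv)
      calc ‖z‖ ^ k * ‖χ z⁻¹‖ ≤ (1 + ‖z‖) ^ k * ‖χ x1‖ := by
            apply mul_le_mul _ hb1 (norm_nonneg _) (by positivity)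
            exact pow_le_pow_left₀ (norm_nonneg _) (by linarith) k
        _ ≤ (1 + ‖z‖) ^ k * C := by
            apply mul_le_mul_of_nonneg_left (le_max_left _ _) (by positivity)
        _ = C * (1 + ‖z‖) ^ k := mul_comm _ _
  obtain ⟨c, hc⟩ := poly_of_growth k ψ hψdiff ⟨C, hgrow⟩
  -- χ w = ∑ c m * w ^ (k - m) for w ≠ 0
  have hχval : ∀ w : ℂ, w ≠ 0 →
      χ w = ∑ m : Fin (k + 1), c m * w ^ (k - (m : ℕ)) := by
    intro w hw
    have h1 := repF1 hΩ hsub hd heq0 heqp (mem_SL2_chi w) (by simpa using hw)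
    have h2 : χ w = w ^ k * ψ w⁻¹ := by
      simpa [hψdef, hχdef, one_div] using h1
    rw [h2, hc w⁻¹, Finset.mul_sum]
    refine Finset.sum_congr rfl ?_
    intro m _
    have hm : (m : ℕ) ≤ k := Nat.lt_succ_iff.mp m.isLt
    have hsplit : w ^ k = w ^ (m : ℕ) * w ^ (k - (m : ℕ)) := by
      rw [← pow_add, Nat.add_sub_cancel' hm]
    rw [hsplit, inv_pow]
    field_simp
  -- χ 0 = c (last)
  have hlast : χ 0 = c ⟨k, Nat.lt_succ_self k⟩ := by
    have hPcont : ContinuousAt (fun w : ℂ => ∑ m : Fin (k + 1), c m * w ^ (k - (m : ℕ))) 0 := by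
      fun_prop
    have hχcont : ContinuousAt χ 0 := hχdiff.continuous.continuousAt
    have ht1 : Filter.Tendsto χ (nhdsWithin 0 {(0 : ℂ)}ᶜ) (nhds (χ 0)) :=
      (hχcont.continuousWithinAt (s := {(0 : ℂ)}ᶜ)).tendsto
    have ht2 : Filter.Tendsto (fun w : ℂ => ∑ m : Fin (k + 1), c m * w ^ (k - (m : ℕ)))
        (nhdsWithin 0 {(0 : ℂ)}ᶜ) (nhds (∑ m : Fin (k + 1), c m * (0 : ℂ) ^ (k - (m : ℕ)))) :=
      (hPcont.continuousWithinAt (s := {(0 : ℂ)}ᶜ)).tendsto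
    have heqf : χ =ᶠ[nhdsWithin 0 {(0 : ℂ)}ᶜ]
        fun w : ℂ => ∑ m : Fin (k + 1), c m * w ^ (k - (m : ℕ)) := by
      refine Filter.eventuallyEq_of_mem self_mem_nhdsWithin ?_
      intro w hw
      exact hχval w hw
    have := tendsto_nhds_unique (ht1.congr' heqf) ht2
    rw [this]
    rw [Finset.sum_eq_single (⟨k, Nat.lt_succ_self k⟩ : Fin (k + 1))]
    · simp
    · intro m _ hm
      have : k - (m : ℕ) ≠ 0 := by
        have hmk : (m : ℕ) ≠ k := by
          intro hh; apply hm; exact Fin.ext hh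
        have : (m : ℕ) < k := lt_of_le_of_ne (Nat.lt_succ_iff.mp m.isLt) hmk
        omega
      simp [zero_pow this]
    · intro hh; exact absurd (Finset.mem_univ _) hh
  -- conclude
  refine ⟨c, fun U hU => ?_⟩
  rcases eq_or_ne (U 1 0) 0 with hc10 | hc10
  · -- lower-left is zero; U 0 0 ≠ 0
    have hdet : U 0 0 * U 1 1 - U 0 1 * U 1 0 = 1 := by
      simpa [SL2, Matrix.det_fin_two] using hU
    have ha : U 0 0 ≠ 0 := by
      intro hh; rw [hh, hc10] at hdet; simp at hdet
    have h1 := repF2 hΩ hsub hd heq0 heqp hU ha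
    rw [hc10] at h1
    rw [zero_div] at h1
    have h2 : h U = U 0 0 ^ k * χ 0 := h1
    rw [h2, hlast, hc10]
    rw [Finset.sum_eq_single (⟨k, Nat.lt_succ_self k⟩ : Fin (k + 1))]
    · simp [mul_comm]
    · intro m _ hm
      have : k - (m : ℕ) ≠ 0 := by
        have hmk : (m : ℕ) ≠ k := fun hh => hm (Fin.ext hh)
        have : (m : ℕ) < k := lt_of_le_of_ne (Nat.lt_succ_iff.mp m.isLt) hmk
        omega
      simp [zero_pow this]
    · intro hh; exact absurd (Finset.mem_univ _) hh
  · have h1 := repF1 hΩ hsub hd heq0 heqp hU hc10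
    have h2 : h U = U 1 0 ^ k * ψ (U 0 0 / U 1 0) := h1
    rw [h2, hc, Finset.mul_sum]
    refine Finset.sum_congr rfl ?_
    intro m _
    have hm : (m : ℕ) ≤ k := Nat.lt_succ_iff.mp m.isLt
    have hsplit : (U 1 0) ^ k = (U 1 0) ^ (m : ℕ) * (U 1 0) ^ (k - (m : ℕ)) := by
      rw [← pow_add, Nat.add_sub_cancel' hm]
    rw [hsplit, div_pow]
    field_simp

lemma Dm_zero : Dm 0 = (1 : Mat) := by
  ext i j
  fin_cases i <;> fin_cases j <;> simp [Dm, Matrix.one_apply]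

lemma curvePP_zero (U : Mat) : U * ((1 : Mat) + (0 : ℂ) • Hppm) = U := by
  simp

lemma curvePP_col (U : Mat) (s : ℂ) (i : Fin 2) :
    (U * ((1 : Mat) + s • Hppm)) i 0 = U i 0 := by
  rw [one_add_smul_Hppm]
  fin_cases i <;> simp [Matrix.mul_apply, Fin.sum_univ_two]

lemma curveD_col (U : Mat) (t : ℂ) (i : Fin 2) :
    (U * Dm t) i 0 = U i 0 * Complex.exp t := by
  fin_cases i <;> simp [Dm, Matrix.mul_apply, Fin.sum_univ_two]

def psum (k : ℕ) (c : Fin (k + 1) → ℂ) (U : Mat) : ℂ :=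
  ∑ m : Fin (k + 1), c m * U 0 0 ^ (m : ℕ) * U 1 0 ^ (k - (m : ℕ))

lemma psum_curvePP (k : ℕ) (c : Fin (k + 1) → ℂ) (U : Mat) (s : ℂ) :
    psum k c (U * ((1 : Mat) + s • Hppm)) = psum k c U := by
  unfold psum
  rw [curvePP_col U s 0, curvePP_col U s 1]

lemma psum_curveD (k : ℕ) (c : Fin (k + 1) → ℂ) (U : Mat) (t : ℂ) :
    psum k c (U * Dm t) = Complex.exp ((k : ℂ) * t) * psum k c U := by
  unfold psum
  rw [curveD_col U t 0, curveD_col U t 1, Finset.mul_sum]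
  refine Finset.sum_congr rfl ?_
  intro m _
  have hm : (m : ℕ) ≤ k := Nat.lt_succ_iff.mp m.isLt
  rw [mul_pow, mul_pow, Complex.exp_nat_mul]
  have : Complex.exp t ^ (m : ℕ) * Complex.exp t ^ (k - (m : ℕ)) = Complex.exp t ^ k := by
    rw [← pow_add, Nat.add_sub_cancel' hm]
  calc c m * (U 0 0 ^ (m : ℕ) * Complex.exp t ^ (m : ℕ)) *
        (U 1 0 ^ (k - (m : ℕ)) * Complex.exp t ^ (k - (m : ℕ)))
      = (Complex.exp t ^ (m : ℕ) * Complex.exp t ^ (k - (m : ℕ))) *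
        (c m * U 0 0 ^ (m : ℕ) * U 1 0 ^ (k - (m : ℕ))) := by ring
    _ = Complex.exp t ^ k * (c m * U 0 0 ^ (m : ℕ) * U 1 0 ^ (k - (m : ℕ))) := by rw [this]

lemma lieD_ppm_of_eq {k : ℕ} {f f₀ : Mat → ℂ} {Ωf Ω₀ : Set Mat}
    (hΩf : IsOpen Ωf) (hsubf : SL2 ⊆ Ωf) (hdf : DifferentiableOn ℂ f Ωf)
    (hΩ₀ : IsOpen Ω₀) (hsub₀ : SL2 ⊆ Ω₀) (hd₀ : DifferentiableOn ℂ f₀ Ω₀)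
    (c : Fin (k + 1) → ℂ) (hcf : ∀ U ∈ SL2, f U = f₀ U + psum k c U)
    {U : Mat} (hU : U ∈ SL2) :
    lieD Hppm f U = lieD Hppm f₀ U := by
  have mem : ∀ s : ℂ, U * ((1 : Mat) + s • Hppm) ∈ SL2 :=
    fun s => mem_SL2_mul hU (det_one_add_smul_Hppm s)
  have h1 : HasDerivAt (fun s : ℂ => f (U * ((1 : Mat) + s • Hppm))) (lieD Hppm f U) 0 := by
    have := hasDerivAt_comp_curve hΩf hsubf hdf (hasDerivAt_curvePP U 0) (mem 0)
    rw [curvePP_zero] at this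
    exact this
  have h2 : HasDerivAt (fun s : ℂ => f₀ (U * ((1 : Mat) + s • Hppm))) (lieD Hppm f₀ U) 0 := by
    have := hasDerivAt_comp_curve hΩ₀ hsub₀ hd₀ (hasDerivAt_curvePP U 0) (mem 0)
    rw [curvePP_zero] at this
    exact this
  have h3 : (fun s : ℂ => f (U * ((1 : Mat) + s • Hppm)))
      = fun s : ℂ => f₀ (U * ((1 : Mat) + s • Hppm)) + psum k c U := by
    funext s
    rw [hcf _ (mem s), psum_curvePP]
  have h4 : HasDerivAt (fun s : ℂ => f₀ (U * ((1 : Mat) + s • Hppm)) + psum k c U)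
      (lieD Hppm f₀ U) 0 := by
    simpa using h2.add_const (psum k c U)
  rw [h3] at h1
  exact h1.unique h4

lemma lieD_h0_of_eq {k : ℕ} {f f₀ : Mat → ℂ} {Ωf Ω₀ : Set Mat}
    (hΩf : IsOpen Ωf) (hsubf : SL2 ⊆ Ωf) (hdf : DifferentiableOn ℂ f Ωf)
    (hΩ₀ : IsOpen Ω₀) (hsub₀ : SL2 ⊆ Ω₀) (hd₀ : DifferentiableOn ℂ f₀ Ω₀)
    (c : Fin (k + 1) → ℂ) (hcf : ∀ U ∈ SL2, f U = f₀ U + psum k c U)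
    {U : Mat} (hU : U ∈ SL2) :
    lieD H0m f U = lieD H0m f₀ U + (k : ℂ) * psum k c U := by
  have mem : ∀ t : ℂ, U * Dm t ∈ SL2 := fun t => mem_SL2_mul hU (det_Dm t)
  have hU0 : U * Dm 0 = U := by rw [Dm_zero, mul_one]
  have h1 : HasDerivAt (fun t : ℂ => f (U * Dm t)) (lieD H0m f U) 0 := by
    have := hasDerivAt_comp_curve hΩf hsubf hdf (hasDerivAt_curveD U 0) (mem 0)
    rw [hU0] at this
    exact this
  have h2 : HasDerivAt (fun t : ℂ => f₀ (U * Dm t)) (lieD H0m f₀ U) 0 := by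
    have := hasDerivAt_comp_curve hΩ₀ hsub₀ hd₀ (hasDerivAt_curveD U 0) (mem 0)
    rw [hU0] at this
    exact this
  have h3 : (fun t : ℂ => f (U * Dm t))
      = fun t : ℂ => f₀ (U * Dm t) + Complex.exp ((k : ℂ) * t) * psum k c U := by
    funext t
    rw [hcf _ (mem t), psum_curveD]
  have hexp : HasDerivAt (fun t : ℂ => Complex.exp ((k : ℂ) * t) * psum k c U)
      ((k : ℂ) * psum k c U) 0 := by
    have he : HasDerivAt (fun t : ℂ => Complex.exp ((k : ℂ) * t))
        (Complex.exp ((k : ℂ) * 0) * (k : ℂ)) 0 := by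
      simpa using ((hasDerivAt_id (0 : ℂ)).const_mul (k : ℂ)).cexp
    have := he.mul_const (psum k c U)
    simpa using this
  have h4 := h2.add hexp
  rw [h3] at h1
  exact h1.unique h4

lemma coeff_unique {k : ℕ} (c c' : Fin (k + 1) → ℂ)
    (hyp : ∀ t : ℂ, (∑ m : Fin (k + 1), c m * t ^ (m : ℕ))
      = ∑ m : Fin (k + 1), c' m * t ^ (m : ℕ)) : c = c' := by
  set P : Polynomial ℂ := ∑ m : Fin (k + 1), Polynomial.C (c m) * Polynomial.X ^ (m : ℕ) with hP
  set P' : Polynomial ℂ := ∑ m : Fin (k + 1), Polynomial.C (c' m) * Polynomial.X ^ (m : ℕ) with hP'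
  have hPP : P = P' := by
    apply Polynomial.funext
    intro t
    rw [hP, hP']
    simp only [Polynomial.eval_finset_sum, Polynomial.eval_mul, Polynomial.eval_C,
      Polynomial.eval_pow, Polynomial.eval_X]
    exact hyp t
  have key : ∀ (b : Fin (k + 1) → ℂ) (m : Fin (k + 1)),
      (∑ j : Fin (k + 1), Polynomial.C (b j) * Polynomial.X ^ (j : ℕ)).coeff (m : ℕ) = b m := by
    intro b m
    rw [Polynomial.finset_sum_coeff]
    rw [Finset.sum_eq_single m]
    · simp
    · intro j _ hj
      have : (j : ℕ) ≠ (m : ℕ) := fun hh => hj (Fin.ext hh)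
      simp only [Polynomial.coeff_C_mul, Polynomial.coeff_X_pow]
      rw [if_neg (fun hh => this hh.symm)]
      simp
    · intro hh; exact absurd (Finset.mem_univ _) hh
  funext m
  have := congrArg (fun q => Polynomial.coeff q (m : ℕ)) hPP
  simpa [hP, hP', key] using this

theorem stmt_10 (k : ℕ) (g : Matrix (Fin 2) (Fin 2) ℂ → ℂ) (hg : HolSL2 g)
    (hgch : ∀ U ∈ SL2, lieD H0m g U = ((k : ℂ) + 2) * g U)
    (f₀ : Matrix (Fin 2) (Fin 2) ℂ → ℂ) (hf₀ : HolSL2 f₀)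
    (hf₀ch : ∀ U ∈ SL2, lieD H0m f₀ U = (k : ℂ) * f₀ U)
    (hf₀eq : ∀ U ∈ SL2, lieD Hppm f₀ U = g U) :
    (∀ f : Matrix (Fin 2) (Fin 2) ℂ → ℂ, HolSL2 f →
      (((∀ U ∈ SL2, lieD H0m f U = (k : ℂ) * f U) ∧
        (∀ U ∈ SL2, lieD Hppm f U = g U)) ↔
       ∃ c : Fin (k + 1) → ℂ, ∀ U ∈ SL2,
         f U = f₀ U + ∑ m : Fin (k + 1), c m * U 0 0 ^ (m : ℕ) * U 1 0 ^ (k - (m : ℕ)))) ∧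
    (∀ c c' : Fin (k + 1) → ℂ,
      (∀ U ∈ SL2,
        (∑ m : Fin (k + 1), c m * U 0 0 ^ (m : ℕ) * U 1 0 ^ (k - (m : ℕ))) =
        (∑ m : Fin (k + 1), c' m * U 0 0 ^ (m : ℕ) * U 1 0 ^ (k - (m : ℕ)))) →
      c = c') := by
  obtain ⟨Ω₀, hΩ₀, hsub₀, hd₀⟩ := hf₀
  constructor
  · intro f hf
    obtain ⟨Ωf, hΩf, hsubf, hdf⟩ := hf
    have hdaf : ∀ U ∈ SL2, DifferentiableAt ℂ f U :=
      fun U hU => hdf.differentiableAt (hΩf.mem_nhds (hsubf hU))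
    have hda0 : ∀ U ∈ SL2, DifferentiableAt ℂ f₀ U :=
      fun U hU => hd₀.differentiableAt (hΩ₀.mem_nhds (hsub₀ hU))
    constructor
    · rintro ⟨hch, heqg⟩
      set h : Mat → ℂ := fun U => f U - f₀ U with hh
      have hΩ' : IsOpen (Ωf ∩ Ω₀) := hΩf.inter hΩ₀
      have hsub' : SL2 ⊆ Ωf ∩ Ω₀ := Set.subset_inter hsubf hsub₀
      have hd' : DifferentiableOn ℂ h (Ωf ∩ Ω₀) :=
        (hdf.mono Set.inter_subset_left).sub (hd₀.mono Set.inter_subset_right)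
      have hsubderiv : ∀ X : Mat, ∀ U ∈ SL2, lieD X h U = lieD X f U - lieD X f₀ U := by
        intro X U hU
        simp only [lieD, hh]
        rw [show fderiv ℂ (fun U => f U - f₀ U) U = fderiv ℂ f U - fderiv ℂ f₀ U from
          fderiv_fun_sub (hdaf U hU) (hda0 U hU)]
        simp
      have heq0 : ∀ U ∈ SL2, lieD H0m h U = (k : ℂ) * h U := by
        intro U hU
        rw [hsubderiv H0m U hU, hch U hU, hf₀ch U hU]
        simp only [hh]
        ring
      have heqp : ∀ U ∈ SL2, lieD Hppm h U = 0 := by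
        intro U hU
        rw [hsubderiv Hppm U hU, heqg U hU, hf₀eq U hU, sub_self]
      obtain ⟨c, hc⟩ := master hΩ' hsub' hd' heq0 heqp
      refine ⟨c, fun U hU => ?_⟩
      have := hc U hU
      simp only [hh] at this
      rw [← this]
      ring
    · rintro ⟨c, hcf⟩
      have hcf' : ∀ U ∈ SL2, f U = f₀ U + psum k c U := fun U hU => hcf U hU
      refine ⟨fun U hU => ?_, fun U hU => ?_⟩
      · have := lieD_h0_of_eq hΩf hsubf hdf hΩ₀ hsub₀ hd₀ c hcf' hU
        rw [this, hf₀ch U hU, hcf' U hU]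
        ring
      · have := lieD_ppm_of_eq hΩf hsubf hdf hΩ₀ hsub₀ hd₀ c hcf' hU
        rw [this, hf₀eq U hU]
  · intro c c' hyp
    apply coeff_unique
    intro t
    have := hyp _ (mem_SL2_psi t)
    simpa using this
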